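/- Let n ∈ ℕ with n ≥ 1, let μ be the product measure on ℝ^n whose coordinates are i.i.d. standard Gaussian N(0,1), let v ∈ ℝ^n be nonzero, and let p ∈ (0,1). Define w*(ω) = 1 if ⟨v, ω⟩ ≥ −‖v‖₂ · Φ⁻¹(p) and w*(ω) = 0 otherwise. If w : ℝ^n → [0,1] is measurable with ∫ w dμ = p and μ({ω : w(ω) ≠ w*(ω)}) > 0, then ∫ ⟨v, ω⟩ · w(ω) dμ(ω) < ∫ ⟨v, ω⟩ · w*(ω) dμ(ω). -/

import Mathlib

open MeasureTheory ProbabilityTheory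
open scoped RealInnerProductSpace

/-- The cumulative distribution function `Φ` of the standard Gaussian measure `N(0,1)` on `ℝ`. -/
noncomputable def Phi (x : ℝ) : ℝ := ((gaussianReal 0 1) (Set.Iic x)).toReal

/-- The inverse `Φ⁻¹` of the standard Gaussian CDF on `(0,1)`. -/
noncomputable def PhiInv (p : ℝ) : ℝ := Function.invFun Phi p

open Real Set Filter
open scoped NNReal ENNReal Topology

lemma pdf_conv_pointwise {s t : ℝ≥0} (hs : s ≠ 0) (ht : t ≠ 0) (z x : ℝ) :
    gaussianPDFReal 0 s x * gaussianPDFReal x t z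
      = gaussianPDFReal 0 (s + t) z * gaussianPDFReal ((s : ℝ) * z / ((s : ℝ) + t)) (s * t / (s + t)) x := by
  have ha : (0:ℝ) < s := lt_of_le_of_ne s.coe_nonneg (by exact_mod_cast hs.symm)
  have hb : (0:ℝ) < t := lt_of_le_of_ne t.coe_nonneg (by exact_mod_cast ht.symm)
  have hab : (0:ℝ) < (s:ℝ) + t := by linarith
  have hcoe : ((s * t / (s + t) : ℝ≥0) : ℝ) = (s:ℝ) * t / ((s:ℝ) + t) := by push_cast; ring
  have hcoe2 : ((s + t : ℝ≥0) : ℝ) = (s:ℝ) + t := by push_cast; ring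
  unfold gaussianPDFReal
  rw [hcoe, hcoe2]
  have hsqrt : √(2 * π * s) * √(2 * π * t)
      = √(2 * π * ((s:ℝ) + t)) * √(2 * π * ((s:ℝ) * t / ((s:ℝ) + t))) := by
    rw [← Real.sqrt_mul (by positivity), ← Real.sqrt_mul (by positivity)]
    congr 1
    field_simp
  have hexp : rexp (-(x - 0) ^ 2 / (2 * s)) * rexp (-(z - x) ^ 2 / (2 * t))
      = rexp (-(z - 0) ^ 2 / (2 * ((s:ℝ) + t)))
        * rexp (-(x - (s:ℝ) * z / ((s:ℝ) + t)) ^ 2 / (2 * ((s:ℝ) * t / ((s:ℝ) + t)))) := by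
    rw [← Real.exp_add, ← Real.exp_add]
    congr 1
    field_simp
    ring
  calc (√(2 * π * s))⁻¹ * rexp (-(x - 0) ^ 2 / (2 * s)) * ((√(2 * π * t))⁻¹ * rexp (-(z - x) ^ 2 / (2 * t)))
      = (√(2 * π * s) * √(2 * π * t))⁻¹ * (rexp (-(x - 0) ^ 2 / (2 * s)) * rexp (-(z - x) ^ 2 / (2 * t))) := by
        rw [mul_inv]; ring
    _ = (√(2 * π * ((s:ℝ) + t)) * √(2 * π * ((s:ℝ) * t / ((s:ℝ) + t))))⁻¹
        * (rexp (-(z - 0) ^ 2 / (2 * ((s:ℝ) + t))) * rexp (-(x - (s:ℝ) * z / ((s:ℝ) + t)) ^ 2 / (2 * ((s:ℝ) * t / ((s:ℝ) + t))))) := by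
        rw [hsqrt, hexp]
    _ = _ := by rw [mul_inv]; ring

lemma measurable_pdf_pair (t : ℝ≥0) : Measurable (fun q : ℝ × ℝ => gaussianPDF q.1 t q.2) := by
  unfold gaussianPDF gaussianPDFReal
  exact ((((measurable_snd.sub measurable_fst).pow_const 2).neg.div_const _).exp.const_mul _).ennreal_ofReal

lemma lintegral_pdf_conv {s t : ℝ≥0} (hs : s ≠ 0) (ht : t ≠ 0) (z : ℝ) :
    ∫⁻ x, gaussianPDF 0 s x * gaussianPDF x t z = gaussianPDF 0 (s + t) z := by
  have hst : s * t / (s + t) ≠ 0 := by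
    rw [div_ne_zero_iff]
    exact ⟨mul_ne_zero hs ht, by simp [hs]⟩
  have h1 : ∀ x, gaussianPDF 0 s x * gaussianPDF x t z
      = gaussianPDF 0 (s + t) z * gaussianPDF ((s : ℝ) * z / ((s : ℝ) + t)) (s * t / (s + t)) x := by
    intro x
    unfold gaussianPDF
    rw [← ENNReal.ofReal_mul (gaussianPDFReal_nonneg _ _ _),
      ← ENNReal.ofReal_mul (gaussianPDFReal_nonneg _ _ _), pdf_conv_pointwise hs ht]
  simp_rw [h1]
  rw [lintegral_const_mul _ (measurable_gaussianPDF _ _), lintegral_gaussianPDF_eq_one _ hst,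
    mul_one]

lemma gaussian_conv (s t : ℝ≥0) :
    Measure.map (fun q : ℝ × ℝ => q.1 + q.2) ((gaussianReal 0 s).prod (gaussianReal 0 t))
      = gaussianReal 0 (s + t) := by
  by_cases hs : s = 0
  · subst hs
    rw [gaussianReal_zero_var, zero_add]
    rw [Measure.dirac_prod, Measure.map_map measurable_add (measurable_prodMk_left)]
    have : ((fun q : ℝ × ℝ => q.1 + q.2) ∘ Prod.mk 0) = (fun y : ℝ => (0:ℝ) + y) := rfl
    rw [this, gaussianReal_map_const_add, add_zero]
  by_cases ht : t = 0
  · subst ht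
    rw [gaussianReal_zero_var, add_zero]
    rw [Measure.prod_dirac, Measure.map_map measurable_add measurable_prodMk_right]
    have : ((fun q : ℝ × ℝ => q.1 + q.2) ∘ fun x : ℝ => (x, (0:ℝ))) = (fun x : ℝ => x + (0:ℝ)) := rfl
    rw [this, gaussianReal_map_add_const, add_zero]
  have hst : s + t ≠ 0 := by simp [hs]
  ext S hS
  rw [Measure.map_apply measurable_add hS, Measure.prod_apply (measurable_add hS)]
  have hsect : ∀ x : ℝ, (gaussianReal 0 t) (Prod.mk x ⁻¹' ((fun q : ℝ × ℝ => q.1 + q.2) ⁻¹' S))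
      = ∫⁻ z in S, gaussianPDF x t z := by
    intro x
    have : Prod.mk x ⁻¹' ((fun q : ℝ × ℝ => q.1 + q.2) ⁻¹' S) = (fun y => x + y) ⁻¹' S := rfl
    rw [this, ← Measure.map_apply (measurable_const_add x) hS, gaussianReal_map_const_add,
      zero_add, gaussianReal_apply _ ht S]
  simp_rw [hsect]
  rw [gaussianReal_of_var_ne_zero _ hs,
    lintegral_withDensity_eq_lintegral_mul _ (measurable_gaussianPDF 0 s)]
  swap
  · exact Measurable.lintegral_prod_right (measurable_pdf_pair t)
  · simp_rw [Pi.mul_apply]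
    have hpt : ∀ x : ℝ, gaussianPDF 0 s x * ∫⁻ z in S, gaussianPDF x t z
        = ∫⁻ z in S, gaussianPDF 0 s x * gaussianPDF x t z := by
      intro x
      rw [← lintegral_const_mul _ (measurable_gaussianPDF x t)]
    simp_rw [hpt]
    rw [lintegral_lintegral_swap]
    · simp_rw [lintegral_pdf_conv hs ht]
      rw [gaussianReal_apply _ hst S]
    · exact (((measurable_gaussianPDF 0 s).comp measurable_fst).mul (measurable_pdf_pair t)).aemeasurable

lemma measurable_lin {n : ℕ} (c : Fin n → ℝ) :
    Measurable (fun ω : Fin n → ℝ => ∑ i, c i * ω i) :=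
  Finset.measurable_sum _ (fun i _ => by fun_prop)

lemma map_lin_pi : ∀ (n : ℕ) (c : Fin n → ℝ),
    Measure.map (fun ω : Fin n → ℝ => ∑ i, c i * ω i)
        (Measure.pi fun _ => gaussianReal 0 1)
      = gaussianReal 0 (∑ i, (⟨(c i)^2, sq_nonneg _⟩ : ℝ≥0)) := by
  intro n
  induction n with
  | zero =>
    intro c
    simp only [Finset.univ_eq_empty, Finset.sum_empty]
    rw [Measure.map_const, measure_univ, one_smul]
    convert (gaussianReal_zero_var 0).symm
    exact Finset.sum_empty
  | succ n ih =>
    intro c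
    have hmp := measurePreserving_piFinSuccAbove (fun _ : Fin (n+1) => gaussianReal 0 1) 0
    set e := MeasurableEquiv.piFinSuccAbove (fun _ : Fin (n+1) => ℝ) 0 with he
    have hpi : (Measure.pi fun _ : Fin (n+1) => gaussianReal 0 1)
        = Measure.map e.symm ((gaussianReal 0 1).prod (Measure.pi fun _ : Fin n => gaussianReal 0 1)) := by
      exact (hmp.symm e).map_eq.symm
    rw [hpi, Measure.map_map (measurable_lin c) e.symm.measurable]
    have hfun : ((fun ω : Fin (n+1) → ℝ => ∑ i, c i * ω i) ∘ ⇑e.symm)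
        = (fun q : ℝ × ℝ => q.1 + q.2) ∘ (Prod.map (fun x : ℝ => c 0 * x)
            (fun y : Fin n → ℝ => ∑ i, c i.succ * y i)) := by
      ext q
      simp only [he, Function.comp_apply, Prod.map_apply,
        MeasurableEquiv.piFinSuccAbove_symm_apply, Fin.insertNthEquiv_apply,
        Fin.sum_univ_succ, Fin.insertNth_apply_same, Fin.insertNth_zero,
        Fin.cons_succ, Fin.cons_zero]
      simp
    rw [hfun, ← Measure.map_map measurable_add
        (Measurable.prodMap (measurable_const_mul _) (measurable_lin _)),
      ← Measure.map_prod_map _ _ (measurable_const_mul _) (measurable_lin _),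
      gaussianReal_map_const_mul, ih, mul_zero, mul_one, gaussian_conv]
    congr 1
    exact (Fin.sum_univ_succ (fun i => (⟨(c i)^2, sq_nonneg _⟩ : ℝ≥0))).symm

lemma std_singleton (x : ℝ) : gaussianReal 0 1 {x} = 0 :=
  gaussianReal_absolutelyContinuous 0 (v := 1) one_ne_zero (by simp)

lemma std_map_neg : Measure.map (fun x : ℝ => -x) (gaussianReal 0 1) = gaussianReal 0 1 := by
  have h := gaussianReal_map_const_mul (μ := 0) (v := 1) (-1)
  simp only [neg_one_mul, mul_zero] at h
  rw [h]
  congr 1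
  ext
  norm_num

lemma std_Iic_neg (x : ℝ) : gaussianReal 0 1 (Iic (-x)) = gaussianReal 0 1 (Ici x) := by
  conv_lhs => rw [← std_map_neg]
  rw [Measure.map_apply measurable_neg measurableSet_Iic]
  congr 1
  ext y
  simp

lemma Phi_add_Phi_neg (x : ℝ) : Phi (-x) + Phi x = 1 := by
  unfold Phi
  rw [← ENNReal.toReal_add (measure_ne_top _ _) (measure_ne_top _ _), std_Iic_neg]
  have h1 : gaussianReal 0 1 (Iic x) = gaussianReal 0 1 (Iio x) :=
    (measure_congr (Iio_ae_eq_Iic' (std_singleton x))).symm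
  rw [h1]
  have h2 : gaussianReal 0 1 (Ici x) + gaussianReal 0 1 (Iio x) = 1 := by
    rw [add_comm, ← Set.compl_Iio,
      measure_add_measure_compl measurableSet_Iio, measure_univ]
  rw [h2, ENNReal.toReal_one]

lemma Phi_eq_integral (x : ℝ) : Phi x = ∫ t in Set.Iic x, gaussianPDFReal 0 1 t := by
  unfold Phi
  rw [gaussianReal_of_var_ne_zero 0 one_ne_zero, withDensity_apply _ measurableSet_Iic,
    integral_eq_lintegral_of_nonneg_ae (ae_of_all _ fun t => gaussianPDFReal_nonneg 0 1 t)
      (stronglyMeasurable_gaussianPDFReal 0 1).aestronglyMeasurable]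
  rfl

lemma Phi_continuous : Continuous Phi := by
  have hint := integrable_gaussianPDFReal 0 1
  have h : Phi = fun x => (∫ t in Set.Iic (0:ℝ), gaussianPDFReal 0 1 t)
      + ∫ t in (0:ℝ)..x, gaussianPDFReal 0 1 t := by
    funext x
    rw [Phi_eq_integral, ← intervalIntegral.integral_Iic_sub_Iic hint.integrableOn
      hint.integrableOn]
    ring
  rw [h]
  exact continuous_const.add (hint.continuous_primitive 0)

lemma Phi_tendsto_atTop : Tendsto Phi atTop (𝓝 1) := by
  have h := tendsto_measure_Iic_atTop (gaussianReal 0 1)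
  rw [measure_univ] at h
  have := (ENNReal.tendsto_toReal ENNReal.one_ne_top).comp h
  exact this

lemma exists_Phi_eq {p : ℝ} (hp : p ∈ Set.Ioo (0:ℝ) 1) : ∃ x, Phi x = p := by
  have hmax : max p (1 - p) < 1 := by
    rcases hp with ⟨h0, h1⟩
    rw [max_lt_iff]
    constructor <;> linarith
  have hev : ∀ᶠ x in atTop, max p (1 - p) < Phi x :=
    Phi_tendsto_atTop.eventually (eventually_gt_nhds hmax)
  obtain ⟨b, hb⟩ := hev.exists
  have hbp : p < Phi b := lt_of_le_of_lt (le_max_left _ _) hb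
  have hbn : Phi (-b) < p := by
    have := Phi_add_Phi_neg b
    have h2 : 1 - p < Phi b := lt_of_le_of_lt (le_max_right _ _) hb
    linarith
  have : p ∈ Set.Icc (Phi (-b)) (Phi b) := ⟨hbn.le, hbp.le⟩
  exact intermediate_value_univ (-b) b Phi_continuous this

lemma Phi_PhiInv {p : ℝ} (hp : p ∈ Set.Ioo (0:ℝ) 1) : Phi (PhiInv p) = p :=
  Function.invFun_eq (exists_Phi_eq hp)

lemma std_Iic_PhiInv {p : ℝ} (hp : p ∈ Set.Ioo (0:ℝ) 1) :
    gaussianReal 0 1 (Iic (PhiInv p)) = ENNReal.ofReal p := by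
  calc gaussianReal 0 1 (Iic (PhiInv p))
      = ENNReal.ofReal (Phi (PhiInv p)) := by
        rw [Phi, ENNReal.ofReal_toReal (measure_ne_top _ _)]
    _ = ENNReal.ofReal p := by rw [Phi_PhiInv hp]

lemma std_Ici_neg_PhiInv {p : ℝ} (hp : p ∈ Set.Ioo (0:ℝ) 1) :
    gaussianReal 0 1 (Ici (-PhiInv p)) = ENNReal.ofReal p := by
  rw [← std_Iic_neg, neg_neg, std_Iic_PhiInv hp]

lemma core {α : Type*} [MeasurableSpace α] (μ : Measure α) [IsProbabilityMeasure μ]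
    (f : α → ℝ) (hfm : Measurable f) (hf_int : Integrable f μ) (t p : ℝ) (hp0 : 0 ≤ p)
    (h_tail : μ {ω | t ≤ f ω} = ENNReal.ofReal p)
    (h_atom : μ {ω | f ω = t} = 0)
    (wStar w : α → ℝ) (hwStar : ∀ ω, wStar ω = if t ≤ f ω then 1 else 0)
    (hw : Measurable w) (hw01 : ∀ ω, w ω ∈ Set.Icc (0:ℝ) 1) (hwp : ∫ ω, w ω ∂μ = p)
    (hne : 0 < μ {ω | w ω ≠ wStar ω}) :
    ∫ ω, f ω * w ω ∂μ < ∫ ω, f ω * wStar ω ∂μ := by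
  classical
  have hA : MeasurableSet (f ⁻¹' Ici t) := hfm measurableSet_Ici
  have hwStar_eq : wStar = (f ⁻¹' Ici t).indicator (1 : α → ℝ) := by
    funext ω
    rw [hwStar ω]
    by_cases h : t ≤ f ω <;>
      simp [h, Set.indicator_apply, Set.mem_preimage, Set.mem_Ici]
  have hwS01 : ∀ ω, wStar ω ∈ Set.Icc (0:ℝ) 1 := by
    intro ω; rw [hwStar ω]; split_ifs <;> norm_num
  have hwSm : Measurable wStar := by
    rw [hwStar_eq]; exact (measurable_const.indicator hA)
  have hwS_int : Integrable wStar μ := by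
    rw [hwStar_eq]; exact (integrable_const (1:ℝ)).indicator hA
  have hwSp : ∫ ω, wStar ω ∂μ = p := by
    rw [hwStar_eq]
    rw [integral_indicator_one hA]
    have : f ⁻¹' Ici t = {ω | t ≤ f ω} := rfl
    rw [this, measureReal_def, h_tail, ENNReal.toReal_ofReal hp0]
  have hw_int : Integrable w μ := by
    refine Integrable.mono' (integrable_const (1:ℝ)) hw.aestronglyMeasurable
      (ae_of_all _ fun ω => ?_)
    rw [Real.norm_eq_abs, abs_le]
    exact ⟨by linarith [(hw01 ω).1], by simpa using (hw01 ω).2⟩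
  have hbd : ∀ (u : α → ℝ), (∀ ω, u ω ∈ Set.Icc (0:ℝ) 1) → Measurable u →
      Integrable (fun ω => f ω * u ω) μ := by
    intro u hu01 hum
    refine Integrable.mono' hf_int.abs ((hfm.mul hum).aestronglyMeasurable)
      (ae_of_all _ fun ω => ?_)
    rw [Real.norm_eq_abs, abs_mul]
    calc |f ω| * |u ω| ≤ |f ω| * 1 := by
          refine mul_le_mul_of_nonneg_left ?_ (abs_nonneg _)
          rw [abs_le]
          exact ⟨by linarith [(hu01 ω).1], (hu01 ω).2⟩
      _ = |f ω| := mul_one _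
  have hfw_int := hbd w hw01 hw
  have hfwS_int := hbd wStar hwS01 hwSm
  set g : α → ℝ := fun ω => (f ω - t) * (wStar ω - w ω) with hg
  have h_nonneg : ∀ ω, 0 ≤ g ω := by
    intro ω
    show 0 ≤ (f ω - t) * (wStar ω - w ω)
    rw [hwStar ω]
    split_ifs with h
    · exact mul_nonneg (by linarith) (by linarith [(hw01 ω).2])
    · push_neg at h
      exact mul_nonneg_of_nonpos_of_nonpos (by linarith) (by linarith [(hw01 ω).1])
  have hg_int : Integrable g μ := by
    have hg_eq : g = fun ω => ((f ω * wStar ω - f ω * w ω) - (t * wStar ω - t * w ω)) := by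
      funext ω; rw [hg]; ring
    rw [hg_eq]
    exact (hfwS_int.sub hfw_int).sub ((hwS_int.const_mul t).sub (hw_int.const_mul t))
  have h_supp : {ω | w ω ≠ wStar ω} ⊆ Function.support g ∪ {ω | f ω = t} := by
    intro ω hω
    by_cases hft : f ω = t
    · exact Or.inr hft
    · left
      exact mul_ne_zero (sub_ne_zero.mpr hft) (sub_ne_zero.mpr (Ne.symm hω))
  have h_supp_pos : 0 < μ (Function.support g) := by
    refine lt_of_lt_of_le hne ?_
    calc μ {ω | w ω ≠ wStar ω} ≤ μ (Function.support g ∪ {ω | f ω = t}) :=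
          measure_mono h_supp
      _ ≤ μ (Function.support g) + μ {ω | f ω = t} := measure_union_le _ _
      _ = μ (Function.support g) := by rw [h_atom, add_zero]
  have h_pos : 0 < ∫ ω, g ω ∂μ :=
    (integral_pos_iff_support_of_nonneg h_nonneg hg_int).mpr h_supp_pos
  have hexp : ∫ ω, g ω ∂μ = (∫ ω, f ω * wStar ω ∂μ) - ∫ ω, f ω * w ω ∂μ := by
    have hg_eq : g = fun ω => ((f ω * wStar ω - f ω * w ω) - (t * wStar ω - t * w ω)) := by
      funext ω; rw [hg]; ring
    have i1 : Integrable (fun ω => f ω * wStar ω - f ω * w ω) μ := hfwS_int.sub hfw_int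
    have i2 : Integrable (fun ω => t * wStar ω - t * w ω) μ :=
      (hwS_int.const_mul t).sub (hw_int.const_mul t)
    have i3 : Integrable (fun ω => t * wStar ω) μ := hwS_int.const_mul t
    have i4 : Integrable (fun ω => t * w ω) μ := hw_int.const_mul t
    rw [hg_eq, integral_sub i1 i2, integral_sub hfwS_int hfw_int, integral_sub i3 i4,
      integral_const_mul, integral_const_mul, hwSp, hwp]
    ring
  linarith [hexp ▸ h_pos]

/-- integrability of the identity w.r.t. a nondegenerate Gaussian -/
lemma integrable_id_gaussian {V : ℝ≥0} (hV : V ≠ 0) :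
    Integrable (fun x : ℝ => x) (gaussianReal 0 V) := by
  have hVpos : (0:ℝ) < V := lt_of_le_of_ne V.coe_nonneg (by exact_mod_cast hV.symm)
  have key : Integrable (fun x : ℝ => x * gaussianPDFReal 0 V x) volume := by
    have h := (integrable_mul_exp_neg_mul_sq (b := (2 * (V:ℝ))⁻¹) (by positivity)).const_mul
      ((√(2 * π * V))⁻¹)
    have heq : (fun x : ℝ => x * gaussianPDFReal 0 V x)
        = fun x : ℝ => (√(2 * π * V))⁻¹ * (x * rexp (-(2 * (V:ℝ))⁻¹ * x ^ 2)) := by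
      funext x
      unfold gaussianPDFReal
      rw [show -(2 * (V:ℝ))⁻¹ * x ^ 2 = -(x - 0) ^ 2 / (2 * (V:ℝ)) by ring]
      ring
    rw [heq]
    exact h
  rw [gaussianReal_of_var_ne_zero _ hV]
  rw [integrable_withDensity_iff (measurable_gaussianPDF 0 V)
    (ae_of_all _ fun x => ENNReal.ofReal_lt_top)]
  refine key.congr (ae_of_all _ fun x => ?_)
  simp only [gaussianPDF]
  rw [ENNReal.toReal_ofReal (gaussianPDFReal_nonneg 0 V x)]

/-- **Lemma A.3 (strict optimality)**: the half-space indicator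
`w*(ω) = 1_{⟨v,ω⟩ ≥ −‖v‖·Φ⁻¹(p)}` is the unique (up to `μ`-null sets) maximizer of the
linear correlation among measurable `w : ℝⁿ → [0,1]` with Gaussian mean `p`. -/
theorem stmt_6
    (n : ℕ) (hn : 1 ≤ n)
    (μ : Measure (EuclideanSpace ℝ (Fin n)))
    (hμ : μ = Measure.map (MeasurableEquiv.toLp 2 (Fin n → ℝ)) (Measure.pi (fun _ => gaussianReal 0 1)))
    (v : EuclideanSpace ℝ (Fin n)) (hv : v ≠ 0)
    (p : ℝ) (hp : p ∈ Set.Ioo (0 : ℝ) 1)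
    (wStar : EuclideanSpace ℝ (Fin n) → ℝ)
    (hwStar : ∀ ω, wStar ω = if -‖v‖ * PhiInv p ≤ ⟪v, ω⟫ then (1 : ℝ) else 0)
    (w : EuclideanSpace ℝ (Fin n) → ℝ) (hw : Measurable w)
    (hw01 : ∀ ω, w ω ∈ Set.Icc (0 : ℝ) 1)
    (hwp : ∫ ω, w ω ∂μ = p)
    (hne : 0 < μ {ω | w ω ≠ wStar ω}) :
    ∫ ω, ⟪v, ω⟫ * w ω ∂μ < ∫ ω, ⟪v, ω⟫ * wStar ω ∂μ := by
  have h1 : IsProbabilityMeasure (Measure.pi fun _ : Fin n => gaussianReal 0 1) :=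
    inferInstance
  haveI hprob : IsProbabilityMeasure μ := by rw [hμ]; exact Measure.isProbabilityMeasure_map (MeasurableEquiv.toLp 2 (Fin n → ℝ)).measurable.aemeasurable
  set t : ℝ := -‖v‖ * PhiInv p with ht
  set f : EuclideanSpace ℝ (Fin n) → ℝ := fun ω => ⟪v, ω⟫ with hf
  have hf_sum : ∀ ω, f ω = ∑ i, v i * ω i := by
    intro ω
    simp [hf, PiLp.inner_apply, RCLike.inner_apply, conj_trivial]
    exact Finset.sum_congr rfl fun i _ => mul_comm _ _
  have hfeq : f = fun ω : EuclideanSpace ℝ (Fin n) => ∑ i, v i * ω i := funext hf_sum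
  have hfm : Measurable f := by
    rw [hfeq]
    exact (measurable_lin (n := n) (fun i => v i)).comp (MeasurableEquiv.toLp 2 (Fin n → ℝ)).symm.measurable
  classical
  set V : ℝ≥0 := ⟨‖v‖^2, sq_nonneg _⟩ with hVdef
  have hnorm : (0:ℝ) < ‖v‖ := norm_pos_iff.mpr hv
  have hVne : V ≠ 0 := by
    intro h
    have h2 : ((V : ℝ≥0) : ℝ) = 0 := by rw [h]; simp
    rw [hVdef] at h2
    change ‖v‖^2 = 0 at h2
    nlinarith
  have hVsum : (∑ i, (⟨(v i)^2, sq_nonneg _⟩ : ℝ≥0)) = V := by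
    apply NNReal.coe_injective
    erw [NNReal.coe_sum]
    change ∑ x, (v x)^2 = ‖v‖^2
    rw [← real_inner_self_eq_norm_sq]
    simp only [PiLp.inner_apply, RCLike.inner_apply, conj_trivial]
    exact Finset.sum_congr rfl fun i _ => (sq (v i))
  have hlaw : μ.map f = gaussianReal 0 V := by
    rw [hμ, Measure.map_map hfm (MeasurableEquiv.toLp 2 (Fin n → ℝ)).measurable, hfeq]
    exact (map_lin_pi n (fun i => v i)).trans (by exact congrArg _ hVsum)
  have hmapmul : Measure.map (fun x : ℝ => ‖v‖ * x) (gaussianReal 0 1) = gaussianReal 0 V := by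
    rw [gaussianReal_map_const_mul, mul_zero, mul_one]
    rfl
  have h_tail : μ {ω | t ≤ f ω} = ENNReal.ofReal p := by
    have hset : {ω | t ≤ f ω} = f ⁻¹' (Ici t) := rfl
    rw [hset, ← Measure.map_apply hfm measurableSet_Ici, hlaw, ← hmapmul,
      Measure.map_apply (measurable_const_mul _) measurableSet_Ici]
    have hpre : (fun x : ℝ => ‖v‖ * x) ⁻¹' (Ici t) = Ici (-PhiInv p) := by
      ext x
      simp only [mem_preimage, mem_Ici, ht]
      rw [show -‖v‖ * PhiInv p = ‖v‖ * (-PhiInv p) by ring]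
      exact ⟨fun h => (mul_le_mul_iff_of_pos_left hnorm).mp h, fun h => (mul_le_mul_iff_of_pos_left hnorm).mpr h⟩
    rw [hpre, std_Ici_neg_PhiInv hp]
  have h_atom : μ {ω | f ω = t} = 0 := by
    have hset : {ω | f ω = t} = f ⁻¹' {t} := rfl
    rw [hset, ← Measure.map_apply hfm (measurableSet_singleton t), hlaw, ← hmapmul,
      Measure.map_apply (measurable_const_mul _) (measurableSet_singleton t)]
    have hpre : (fun x : ℝ => ‖v‖ * x) ⁻¹' {t} = {t / ‖v‖} := by
      ext x
      simp only [mem_preimage, mem_singleton_iff]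
      rw [mul_comm]
      exact (eq_div_iff hnorm.ne').symm
    rw [hpre, std_singleton]
  have hf_int : Integrable f μ := by
    have hid : Integrable (fun x : ℝ => x) (μ.map f) := by
      rw [hlaw]; exact integrable_id_gaussian hVne
    exact (integrable_map_measure aestronglyMeasurable_id hfm.aemeasurable).mp hid
  exact core μ f hfm hf_int t p hp.1.le h_tail h_atom wStar w (fun ω => hwStar ω) hw hw01
    hwp hne
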